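/- Let f : ℝ^d → ℝ be convex and differentiable with L-Lipschitz gradient, X convex, x* a minimizer of f over X, and let x(1), x(2), …, x(T+1) be any sequence in X. Then for any integer τ ≥ 0 (with the convention x(s) = x(1) for s ≤ 0), Σ_{t=1}^{T} ⟨∇f(x(t)) − ∇f(x(t−τ)), x(t+1) − x*⟩ ≤ Σ_{t=T−τ+1}^{T} D_f(x*, x(t)) + (L/2)·Σ_{t=1}^{T} ‖x(t−τ) − x(t+1)‖², where D_f(x, y) = f(x) − f(y) − ⟨∇f(y), x − y⟩. -/

import Mathlib

open RealInnerProductSpace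

section Aux

variable {n : ℕ}
local notation "E" => EuclideanSpace ℝ (Fin n)

lemma aux_line_hasDerivAt (f : E → ℝ) (f' : E → E)
    (hdiff : ∀ x, HasGradientAt f (f' x) x) (y v : E) (s : ℝ) :
    HasDerivAt (fun s : ℝ => f (y + s • v)) ⟪f' (y + s • v), v⟫ s := by
  have h1 : HasDerivAt (fun s : ℝ => y + s • v) v s := by
    simpa using ((hasDerivAt_id s).smul_const v).const_add y
  have h2 : HasFDerivAt f (InnerProductSpace.toDual ℝ _ (f' (y + s • v))) (y + s • v) :=
    (hdiff (y + s • v))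
  have := h2.comp_hasDerivAt s h1
  exact this

lemma aux_bregman_nonneg (f : E → ℝ) (f' : E → E)
    (hconv : ConvexOn ℝ Set.univ f)
    (hdiff : ∀ x, HasGradientAt f (f' x) x) (y z : E) :
    0 ≤ f z - f y - ⟪f' y, z - y⟫ := by
  set v := z - y with hv
  have hg : ConvexOn ℝ Set.univ (fun s : ℝ => f (y + s • v)) := by
    have := hconv.comp_affineMap
      (AffineMap.lineMap y z : ℝ →ᵃ[ℝ] E)
    have heq : (f ∘ (AffineMap.lineMap y z : ℝ →ᵃ[ℝ] E)) = fun s : ℝ => f (y + s • v) := by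
      funext s
      simp only [Function.comp_apply, AffineMap.lineMap_apply, vsub_eq_sub, vadd_eq_add]
      congr 1
      rw [hv]; abel
    rw [heq] at this
    simpa using this
  have hd : HasDerivWithinAt (fun s : ℝ => f (y + s • v)) ⟪f' y, v⟫ (Set.Ioi (0:ℝ)) 0 := by
    have := aux_line_hasDerivAt f f' hdiff y v 0
    simpa using this.hasDerivWithinAt
  have h01 := hg.le_slope_of_hasDerivWithinAt_Ioi (Set.mem_univ (0:ℝ)) (Set.mem_univ (1:ℝ))
    one_pos hd
  have e1 : y + v = z := by rw [hv]; abel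
  have hslope : slope (fun s : ℝ => f (y + s • v)) 0 1 = f z - f y := by
    simp [slope_def_field, e1]
  rw [hslope] at h01
  linarith

lemma aux_smooth (f : E → ℝ) (f' : E → E)
    (hdiff : ∀ x, HasGradientAt f (f' x) x)
    (L : ℝ) (hlip : ∀ x y, ‖f' x - f' y‖ ≤ L * ‖x - y‖) (y z : E) :
    f z - f y - ⟪f' y, z - y⟫ ≤ L / 2 * ‖y - z‖ ^ 2 := by
  set v := z - y with hv
  set h : ℝ → ℝ := fun s => f (y + s • v) - s * ⟪f' y, v⟫ - L / 2 * s ^ 2 * ‖v‖ ^ 2 with hh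
  have hder : ∀ s : ℝ, HasDerivAt h
      (⟪f' (y + s • v), v⟫ - ⟪f' y, v⟫ - L * s * ‖v‖ ^ 2) s := by
    intro s
    have h1 := aux_line_hasDerivAt f f' hdiff y v s
    have h2 : HasDerivAt (fun s : ℝ => s * ⟪f' y, v⟫) ⟪f' y, v⟫ s := by
      simpa using (hasDerivAt_id s).mul_const ⟪f' y, v⟫
    have hsq : HasDerivAt (fun s : ℝ => s ^ 2) (2 * s) s := by
      simpa using hasDerivAt_pow 2 s
    have h3 := (hsq.const_mul (L / 2)).mul_const (‖v‖ ^ 2)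
    have h4 := (h1.sub h2).sub h3
    convert h4 using 1 <;> first | rfl | ring
  have hanti : AntitoneOn h (Set.Icc 0 1) := by
    apply antitoneOn_of_deriv_nonpos (convex_Icc 0 1)
    · exact fun s _ => ((hder s).continuousAt).continuousWithinAt
    · exact fun s _ => ((hder s).differentiableAt).differentiableWithinAt
    · intro s hs
      rw [(hder s).deriv]
      rw [interior_Icc] at hs
      have hs0 : 0 ≤ s := le_of_lt hs.1
      have hb : ⟪f' (y + s • v) - f' y, v⟫ ≤ L * s * ‖v‖ ^ 2 := by
        calc ⟪f' (y + s • v) - f' y, v⟫ ≤ ‖f' (y + s • v) - f' y‖ * ‖v‖ :=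
              real_inner_le_norm _ _
          _ ≤ (L * ‖(y + s • v) - y‖) * ‖v‖ := by
              apply mul_le_mul_of_nonneg_right (hlip _ _) (norm_nonneg _)
          _ = L * s * ‖v‖ ^ 2 := by
              rw [show (y + s • v) - y = s • v by abel, norm_smul]
              simp [abs_of_nonneg hs0]; ring
      rw [inner_sub_left] at hb
      linarith
  have h10 := hanti (Set.mem_Icc.2 ⟨le_refl 0, zero_le_one⟩)
    (Set.mem_Icc.2 ⟨zero_le_one, le_refl 1⟩) zero_le_one
  have hE : ‖v‖ = ‖y - z‖ := by rw [hv, ← norm_neg]; congr 1; abel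
  simp only [hh] at h10
  simp only [one_smul, zero_smul, add_zero] at h10
  have hyz : y + v = z := by rw [hv]; abel
  rw [hyz] at h10
  rw [← hE]
  nlinarith [h10]

end Aux

/-- Deterministic part of the delayed-gradient error bound
(first claim of Lemma: gradient differencing terms are second order). -/
theorem delayed_gradient_error_bound {n : ℕ}
    (X : Set (EuclideanSpace ℝ (Fin n))) (hXconv : Convex ℝ X)
    (f : EuclideanSpace ℝ (Fin n) → ℝ)
    (f' : EuclideanSpace ℝ (Fin n) → EuclideanSpace ℝ (Fin n))
    (hconv : ConvexOn ℝ Set.univ f)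
    (hdiff : ∀ x, HasGradientAt f (f' x) x)
    (L : ℝ) (hlip : ∀ x y, ‖f' x - f' y‖ ≤ L * ‖x - y‖)
    (xstar : EuclideanSpace ℝ (Fin n)) (hxstar : xstar ∈ X)
    (hmin : ∀ x ∈ X, f xstar ≤ f x)
    (x : ℕ → EuclideanSpace ℝ (Fin n)) (hx : ∀ t, x t ∈ X)
    (hconvention : x 0 = x 1)
    (T τ : ℕ) :
    ∑ t ∈ Finset.Icc 1 T, ⟪f' (x t) - f' (x (t - τ)), x (t + 1) - xstar⟫ ≤
      (∑ t ∈ Finset.Icc (T - τ + 1) T,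
        (f xstar - f (x t) - ⟪f' (x t), xstar - x t⟫))
      + (L / 2) * ∑ t ∈ Finset.Icc 1 T, ‖x (t - τ) - x (t + 1)‖ ^ 2 := by
  set D : EuclideanSpace ℝ (Fin n) → ℝ :=
    fun y => f xstar - f y - ⟪f' y, xstar - y⟫ with hD
  have hDnonneg : ∀ y, 0 ≤ D y := fun y => aux_bregman_nonneg f f' hconv hdiff y xstar
  -- per-term bound
  have hterm : ∀ t, ⟪f' (x t) - f' (x (t - τ)), x (t + 1) - xstar⟫ ≤
      D (x t) - D (x (t - τ)) + L / 2 * ‖x (t - τ) - x (t + 1)‖ ^ 2 := by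
    intro t
    set a := x t
    set b := x (t - τ)
    set c := x (t + 1)
    have h1 : 0 ≤ f c - f a - ⟪f' a, c - a⟫ := aux_bregman_nonneg f f' hconv hdiff a c
    have h2 : f c - f b - ⟪f' b, c - b⟫ ≤ L / 2 * ‖b - c‖ ^ 2 :=
      aux_smooth f f' hdiff L hlip b c
    have hid : ⟪f' a - f' b, c - xstar⟫ =
        (D a - D b) - (f c - f a - ⟪f' a, c - a⟫) + (f c - f b - ⟪f' b, c - b⟫) := by
      simp only [hD, inner_sub_left, inner_sub_right]
      ring
    rw [hid]
    linarith
  calc ∑ t ∈ Finset.Icc 1 T, ⟪f' (x t) - f' (x (t - τ)), x (t + 1) - xstar⟫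
      ≤ ∑ t ∈ Finset.Icc 1 T,
          (D (x t) - D (x (t - τ)) + L / 2 * ‖x (t - τ) - x (t + 1)‖ ^ 2) :=
        Finset.sum_le_sum fun t _ => hterm t
    _ = (∑ t ∈ Finset.Icc 1 T, (D (x t) - D (x (t - τ))))
        + L / 2 * ∑ t ∈ Finset.Icc 1 T, ‖x (t - τ) - x (t + 1)‖ ^ 2 := by
        rw [Finset.sum_add_distrib, Finset.mul_sum]
    _ ≤ (∑ t ∈ Finset.Icc (T - τ + 1) T, D (x t))
        + L / 2 * ∑ t ∈ Finset.Icc 1 T, ‖x (t - τ) - x (t + 1)‖ ^ 2 := by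
        gcongr ?_ + _
        -- telescoping bound
        rw [Finset.sum_sub_distrib]
        have hsplit : ∑ t ∈ Finset.Icc 1 T, D (x t) =
            (∑ t ∈ Finset.Icc 1 (T - τ), D (x t)) +
            ∑ t ∈ Finset.Icc (T - τ + 1) T, D (x t) := by
          rw [show Finset.Icc 1 T = Finset.Ioc 0 T from Finset.Icc_succ_left_eq_Ioc 0 T,
            show Finset.Icc 1 (T - τ) = Finset.Ioc 0 (T - τ) from Finset.Icc_succ_left_eq_Ioc 0 (T-τ),
            show Finset.Icc (T - τ + 1) T = Finset.Ioc (T - τ) T from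
              Finset.Icc_succ_left_eq_Ioc (T - τ) T]
          exact (Finset.sum_Ioc_consecutive _ (Nat.zero_le _) (Nat.sub_le T τ)).symm
        have hreindex : ∑ t ∈ Finset.Icc 1 (T - τ), D (x t) =
            ∑ t ∈ Finset.Icc (1 + τ) (T - τ + τ), D (x (t - τ)) := by
          rw [← Finset.map_add_right_Icc, Finset.sum_map]
          apply Finset.sum_congr rfl
          intro s _
          simp [addRightEmbedding]
        have hsubset : Finset.Icc (1 + τ) (T - τ + τ) ⊆ Finset.Icc 1 T := by
          intro t ht
          simp only [Finset.mem_Icc] at ht ⊢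
          omega
        have hle : ∑ t ∈ Finset.Icc 1 (T - τ), D (x t) ≤
            ∑ t ∈ Finset.Icc 1 T, D (x (t - τ)) := by
          rw [hreindex]
          exact Finset.sum_le_sum_of_subset_of_nonneg hsubset fun t _ _ => hDnonneg _
        linarith [hsplit, hle]
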